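/- Let H be a complex Hilbert space, let P ∈ B(H) be a positive operator, let Q ∈ B(H) be a positive self-adjoint operator with Q² = P, and let V₁, …, Vₙ ∈ B(H) satisfy ‖V₁x‖² + ⋯ + ‖Vₙx‖² ≤ ‖x‖² for all x ∈ H (as holds for a joint partial isometry). If the n-tuple (QV₁Q, …, QVₙQ) is jointly bounded below, then P is invertible in B(H). (This is Case 2 of Theorem 'basic': left invertibility of the spherical Aluthge transform forces invertibility of P.) -/

import Mathlib

/-- Case 2 of Theorem `basic`: Let `P` be positive, `Q` positive with
`Q² = P`, and `V₁, …, Vₙ` satisfy `∑ i, ‖Vᵢ x‖² ≤ ‖x‖²` for all `x`. If the tuple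
`(QV₁Q, …, QVₙQ)` is jointly bounded below, then `P` is invertible in `B(H)`. -/
theorem isUnit_of_sphericalAluthge_bounded_below
    {H : Type*} [NormedAddCommGroup H] [InnerProductSpace ℂ H] [CompleteSpace H]
    {n : ℕ} (P Q : H →L[ℂ] H) (V : Fin n → H →L[ℂ] H)
    (hP : P.IsPositive) (hQ : Q.IsPositive) (hQ2 : Q * Q = P)
    (hV : ∀ x : H, ∑ i, ‖V i x‖ ^ 2 ≤ ‖x‖ ^ 2)
    (hbb : ∃ c : ℝ, 0 < c ∧ ∀ x : H, c ^ 2 * ‖x‖ ^ 2 ≤ ∑ i, ‖(Q * V i * Q) x‖ ^ 2) :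
    IsUnit P := by
  obtain ⟨c, hc, hbb⟩ := hbb
  have hQn : (0:ℝ) ≤ ‖Q‖ := norm_nonneg _
  -- key lower bound: Q is bounded below
  have key : ∀ x : H, ‖x‖ ≤ ((‖Q‖ + 1) / c) * ‖Q x‖ := by
    intro x
    have h1 : ∑ i, ‖(Q * V i * Q) x‖ ^ 2 ≤ (‖Q‖ + 1) ^ 2 * ‖Q x‖ ^ 2 := by
      calc ∑ i, ‖(Q * V i * Q) x‖ ^ 2
          ≤ ∑ i, (‖Q‖ * ‖V i (Q x)‖) ^ 2 := by
            refine Finset.sum_le_sum fun i _ => ?_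
            have : ‖(Q * V i * Q) x‖ ≤ ‖Q‖ * ‖V i (Q x)‖ := Q.le_opNorm _
            exact pow_le_pow_left₀ (norm_nonneg _) this 2
        _ = ‖Q‖ ^ 2 * ∑ i, ‖V i (Q x)‖ ^ 2 := by
            rw [Finset.mul_sum]; exact Finset.sum_congr rfl fun i _ => by ring
        _ ≤ ‖Q‖ ^ 2 * ‖Q x‖ ^ 2 :=
            mul_le_mul_of_nonneg_left (hV _) (sq_nonneg _)
        _ ≤ (‖Q‖ + 1) ^ 2 * ‖Q x‖ ^ 2 := by nlinarith [sq_nonneg ‖Q x‖, norm_nonneg (Q x), hQn]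
    have h2 : (c * ‖x‖) ^ 2 ≤ ((‖Q‖ + 1) * ‖Q x‖) ^ 2 := by
      have := (hbb x).trans h1
      calc (c * ‖x‖) ^ 2 = c ^ 2 * ‖x‖ ^ 2 := by ring
        _ ≤ (‖Q‖ + 1) ^ 2 * ‖Q x‖ ^ 2 := this
        _ = ((‖Q‖ + 1) * ‖Q x‖) ^ 2 := by ring
    have h3 : c * ‖x‖ ≤ (‖Q‖ + 1) * ‖Q x‖ := by
      have hnn : (0:ℝ) ≤ c * ‖x‖ := mul_nonneg hc.le (norm_nonneg _)
      have hnn2 : (0:ℝ) ≤ (‖Q‖ + 1) * ‖Q x‖ := mul_nonneg (by linarith) (norm_nonneg _)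
      nlinarith
    rw [div_mul_eq_mul_div, le_div_iff₀ hc]
    linarith
  have hKnn : (0:ℝ) ≤ (‖Q‖ + 1) / c := by positivity
  have hanti : AntilipschitzWith ⟨(‖Q‖ + 1) / c, hKnn⟩ Q :=
    Q.antilipschitz_of_bound fun x => key x
  have hinj : Function.Injective Q := hanti.injective
  haveI : CompleteSpace (LinearMap.range Q) := by exact hanti.completeSpace_range_clm
  -- orthogonal complement of the range is trivial
  have horth : (LinearMap.range (Q : H →ₗ[ℂ] H))ᗮ = ⊥ := by
    rw [Submodule.eq_bot_iff]
    intro y hy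
    have hQy : Q y = 0 := by
      have h0 : ∀ x : H, (inner ℂ (Q x) y : ℂ) = 0 := fun x =>
        hy (Q x) ⟨x, rfl⟩
      have h1 : (inner ℂ (Q (Q y)) y : ℂ) = 0 := h0 (Q y)
      have hsa : (inner ℂ (Q (Q y)) y : ℂ) = inner ℂ (Q y) (Q y) := by
        have := hQ.isSelfAdjoint
        rw [ContinuousLinearMap.isSelfAdjoint_iff'] at this
        calc (inner ℂ (Q (Q y)) y : ℂ) = inner ℂ (Q y) (Q.adjoint y) := by
              rw [ContinuousLinearMap.adjoint_inner_right]
          _ = inner ℂ (Q y) (Q y) := by rw [this]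
      rw [hsa, inner_self_eq_zero] at h1
      exact h1
    have : Q y = Q 0 := by simpa using hQy
    exact hinj this
  have hrange : LinearMap.range (Q : H →ₗ[ℂ] H) = ⊤ := Submodule.orthogonal_eq_bot_iff.mp horth
  -- Q is a continuous linear equivalence, hence a unit
  let e : H ≃L[ℂ] H := ContinuousLinearEquiv.ofBijective Q
    (LinearMap.ker_eq_bot.mpr hinj) hrange
  have hQu : IsUnit Q := by
    refine ⟨⟨Q, (e.symm : H →L[ℂ] H), ?_, ?_⟩, rfl⟩
    · ext x; exact e.apply_symm_apply x
    · ext x; exact e.symm_apply_apply x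
  rw [← hQ2]
  exact hQu.mul hQu
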